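/- arXiv:2509.03443 — 2 statements merged into one kernel-verified Lean document; each statement's English description precedes it below -/
import Mathlib

section
/- Let L ∈ ℝ^{N×N} be the Laplacian of a strongly connected weighted digraph, and let v ∈ ℝ^N with positive entries satisfy vᵀL = 0 and vᵀ1 = 1. Set V := diag(v) and Q := LᵀV + VL. Then Q is symmetric positive semidefinite and its kernel equals span{1_N}. -/
open Matrix

lemma laplacian_quad_eq {N : ℕ} (A L : Matrix (Fin N) (Fin N) ℝ) (v x : Fin N → ℝ)
    (hL : L = Matrix.diagonal (fun i => ∑ j, A i j) - A)
    (Q : Matrix (Fin N) (Fin N) ℝ)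
    (hQ : Q = Lᵀ * Matrix.diagonal v + Matrix.diagonal v * L)
    (hv_left : Matrix.vecMul v L = 0) :
    x ⬝ᵥ Q *ᵥ x = ∑ i, ∑ j, v i * A i j * (x i - x j)^2 := by
  have hvd : ∀ j, v j * (∑ k, A j k) = ∑ i, v i * A i j := by
    intro j
    have h := congrFun hv_left j
    simp only [hL, vecMul, dotProduct, Matrix.sub_apply, diagonal_apply, Pi.zero_apply,
      mul_sub, Finset.sum_sub_distrib, mul_ite, mul_zero] at h
    rw [Finset.sum_ite_eq' Finset.univ j] at h
    simp at h
    linarith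
  have hstep : x ⬝ᵥ Q *ᵥ x = ∑ i, ∑ j, x i * ((L j i * v j + v i * L i j) * x j) := by
    simp only [dotProduct, mulVec, hQ, Matrix.add_apply, mul_diagonal, diagonal_mul,
      transpose_apply, Finset.mul_sum]
  have hLa : ∀ i j, L i j = (if i = j then (∑ k, A i k) else 0) - A i j := by
    intro i j; simp [hL, diagonal_apply]
  have inner : ∀ i, ∑ j, v i * L i j * x i * x j
      = v i * (∑ k, A i k) * x i ^ 2 - ∑ j, v i * A i j * (x i * x j) := by
    intro i
    have : ∀ j, v i * L i j * x i * x j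
        = (if i = j then v i * (∑ k, A i k) * x i * x j else 0) - v i * A i j * (x i * x j) := by
      intro j
      rw [hLa]
      split <;> ring
    rw [Finset.sum_congr rfl fun j _ => this j, Finset.sum_sub_distrib,
      Finset.sum_ite_eq Finset.univ i]
    simp [sq]; ring
  calc x ⬝ᵥ Q *ᵥ x
      = ∑ i, ∑ j, x i * ((L j i * v j + v i * L i j) * x j) := hstep
    _ = (∑ i, ∑ j, x i * (L j i * v j) * x j) + ∑ i, ∑ j, v i * L i j * x i * x j := by
        rw [← Finset.sum_add_distrib]
        refine Finset.sum_congr rfl fun i _ => ?_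
        rw [← Finset.sum_add_distrib]
        exact Finset.sum_congr rfl fun j _ => by ring
    _ = 2 * ∑ i, ∑ j, v i * L i j * x i * x j := by
        rw [two_mul]
        congr 1
        rw [Finset.sum_comm]
        exact Finset.sum_congr rfl fun i _ => Finset.sum_congr rfl fun j _ => by ring
    _ = 2 * ∑ i, (v i * (∑ k, A i k) * x i ^ 2 - ∑ j, v i * A i j * (x i * x j)) := by
        rw [Finset.sum_congr rfl fun i _ => inner i]
    _ = ∑ i, ∑ j, v i * A i j * (x i - x j)^2 := by
        have expand : ∀ i j, v i * A i j * (x i - x j)^2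
            = v i * A i j * x i ^ 2 - 2 * (v i * A i j * (x i * x j)) + v i * A i j * x j ^ 2 := by
          intro i j; ring
        have h1 : ∑ i, ∑ j, v i * A i j * x i ^ 2 = ∑ i, v i * (∑ k, A i k) * x i ^ 2 := by
          refine Finset.sum_congr rfl fun i _ => ?_
          rw [Finset.mul_sum, Finset.sum_mul]
        have h2 : ∑ i, ∑ j, v i * A i j * x j ^ 2 = ∑ i, v i * (∑ k, A i k) * x i ^ 2 := by
          rw [Finset.sum_comm]
          refine Finset.sum_congr rfl fun j _ => ?_
          rw [← Finset.sum_mul, ← hvd j]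
        rw [Finset.sum_congr rfl fun i _ => Finset.sum_congr rfl fun j _ => expand i j]
        simp only [Finset.sum_add_distrib, Finset.sum_sub_distrib, ← Finset.mul_sum]
        rw [h1, h2]
        ring

/-- For the Laplacian `L` of a strongly connected weighted digraph and the positive
normalized left Perron vector `v`, the matrix `Q = LᵀV + VL` (with `V = diag v`) is
symmetric positive semidefinite and its kernel is the span of the all-ones vector. -/
theorem laplacian_Q_psd_ker {N : ℕ} (hN : 0 < N)
    (A : Matrix (Fin N) (Fin N) ℝ)
    (hA_nonneg : ∀ i j, 0 ≤ A i j) (hA_diag : ∀ i, A i i = 0)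
    (hconn : ∀ i j : Fin N, i ≠ j →
      Relation.TransGen (fun p q : Fin N => 0 < A q p) i j)
    (L : Matrix (Fin N) (Fin N) ℝ)
    (hL : L = Matrix.diagonal (fun i => ∑ j, A i j) - A)
    (v : Fin N → ℝ) (hv_pos : ∀ i, 0 < v i)
    (hv_left : Matrix.vecMul v L = 0) (hv_sum : ∑ i, v i = 1)
    (Q : Matrix (Fin N) (Fin N) ℝ)
    (hQ : Q = Lᵀ * Matrix.diagonal v + Matrix.diagonal v * L) :
    Q.IsSymm ∧ Q.PosSemidef ∧
      (∀ x : Fin N → ℝ, Q.mulVec x = 0 ↔ ∃ c : ℝ, x = fun _ => c) := by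
  have key := fun x => laplacian_quad_eq A L v x hL Q hQ hv_left
  have hsymm : Q.IsSymm := by
    rw [Matrix.IsSymm, hQ, transpose_add, transpose_mul, transpose_mul,
      diagonal_transpose, transpose_transpose, add_comm]
  have hpsd : Q.PosSemidef := by
    refine Matrix.PosSemidef.of_dotProduct_mulVec_nonneg ?_ fun x => ?_
    · rw [Matrix.IsHermitian, conjTranspose_eq_transpose_of_trivial]
      exact hsymm
    · rw [star_trivial, key x]
      refine Finset.sum_nonneg fun i _ => Finset.sum_nonneg fun j _ => ?_
      have := (hv_pos i).le
      have := hA_nonneg i j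
      positivity
  refine ⟨hsymm, hpsd, fun x => ⟨fun hx => ?_, fun ⟨c, hc⟩ => ?_⟩⟩
  · -- kernel ⊆ constants
    have h0 : ∑ i, ∑ j, v i * A i j * (x i - x j)^2 = 0 := by
      rw [← key x, hx, dotProduct_zero]
    have hterm : ∀ i j, v i * A i j * (x i - x j)^2 = 0 := by
      intro i j
      have nonneg : ∀ i j : Fin N, 0 ≤ v i * A i j * (x i - x j)^2 := fun i j => by
        have := (hv_pos i).le
        have := hA_nonneg i j
        positivity
      have h1 := (Finset.sum_eq_zero_iff_of_nonneg
        (fun i _ => Finset.sum_nonneg fun j _ => nonneg i j)).mp h0 i (Finset.mem_univ i)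
      exact (Finset.sum_eq_zero_iff_of_nonneg (fun j _ => nonneg i j)).mp h1 j
        (Finset.mem_univ j)
    have hedge : ∀ i j, 0 < A i j → x i = x j := by
      intro i j hA
      have h := hterm i j
      have hv := (hv_pos i).ne'
      have : (x i - x j)^2 = 0 := by
        rcases mul_eq_zero.mp h with h' | h'
        · rcases mul_eq_zero.mp h' with h'' | h''
          · exact absurd h'' hv
          · exact absurd h'' hA.ne'
        · exact h'
      have := pow_eq_zero_iff (n := 2) (by norm_num) |>.mp this
      linarith
    have htrans : ∀ a b : Fin N, Relation.TransGen (fun p q => 0 < A q p) a b →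
        x a = x b := by
      intro a b h
      induction h with
      | single h => exact (hedge _ _ h).symm
      | tail _ h ih => exact ih.trans (hedge _ _ h).symm
    refine ⟨x ⟨0, hN⟩, funext fun j => ?_⟩
    by_cases hj : j = ⟨0, hN⟩
    · rw [hj]
    · exact htrans j ⟨0, hN⟩ (hconn j ⟨0, hN⟩ hj)
  · -- constants ⊆ kernel
    subst hc
    have hL1 : L *ᵥ (fun _ => (1:ℝ)) = 0 := by
      funext i
      simp only [hL, mulVec, dotProduct, Matrix.sub_apply, diagonal_apply, mul_one,
        Finset.sum_sub_distrib, Pi.zero_apply]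
      rw [Finset.sum_ite_eq Finset.univ i]
      simp
    have hV1 : Matrix.diagonal v *ᵥ (fun _ => (1:ℝ)) = v := by
      funext i; simp [mulVec_diagonal]
    have hLt : Lᵀ *ᵥ v = 0 := by
      rw [mulVec_transpose, hv_left]
    have hQ1 : Q *ᵥ (fun _ => (1:ℝ)) = 0 := by
      rw [hQ, add_mulVec, ← mulVec_mulVec, ← mulVec_mulVec, hV1, hL1, hLt,
        mulVec_zero, add_zero]
    have : (fun _ : Fin N => c) = c • (fun _ : Fin N => (1:ℝ)) := by
      funext i; simp
    rw [this, mulVec_smul, hQ1, smul_zero]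
end

section
/- Let L be the Laplacian of a strongly connected digraph with positive normalized left Perron vector v (vᵀL = 0, vᵀ1 = 1). Suppose the trajectory γ : [0,∞) → ℝ^N satisfies γ̇ = −k_γ L γ + g(t) with |g_i(t)| ≤ 1 for all i and t, where k_γ > 0. Define γ_s := vᵀγ and W(γ) := (γ − 1_N γ_s)ᵀ V (γ − 1_N γ_s) with V = diag(v). Then Ẇ ≤ −(k_γ λ₂(Q)/(2 max_i v_i)) W + 2/(k_γ λ₂(Q)), where Q := LᵀV + VL and λ₂(Q) is its smallest nonzero eigenvalue. -/
open Matrix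
open scoped InnerProductSpace


lemma quad_sym {N : ℕ} (Q : Matrix (Fin N) (Fin N) ℝ) (hQT : Qᵀ = Q)
    (x y : Fin N → ℝ) :
    ∑ i, x i * Q.mulVec y i = ∑ i, Q.mulVec x i * y i := by
  simp only [Matrix.mulVec, dotProduct, Finset.mul_sum, Finset.sum_mul]
  rw [Finset.sum_comm]
  refine Finset.sum_congr rfl fun j _ => Finset.sum_congr rfl fun i _ => ?_
  have hij : Q j i = Q i j := by
    conv_lhs => rw [← hQT]
    rfl
  rw [hij]; ring

lemma quad_lower {N : ℕ} (Q : Matrix (Fin N) (Fin N) ℝ) (hQT : Qᵀ = Q)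
    (lam2 : ℝ)
    (h_min : ∀ (μ : ℝ) (x : Fin N → ℝ), x ≠ 0 → Q.mulVec x = μ • x → μ ≠ 0 → lam2 ≤ μ)
    (hker : ∀ x : Fin N → ℝ, Q.mulVec x = 0 → ∀ i j, x i = x j)
    (w : Fin N → ℝ) (hw : ∑ i, w i = 0) :
    lam2 * ∑ i, w i ^ 2 ≤ ∑ i, w i * Q.mulVec w i := by
  have hQsym : Q.IsHermitian := by
    ext i j
    have := congrFun (congrFun hQT i) j
    simpa [Matrix.transpose_apply] using this
  set B := hQsym.eigenvectorBasis with hB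
  set μ := hQsym.eigenvalues with hμ
  let bk : Fin N → Fin N → ℝ := fun k i => B k i
  have hbk : ∀ k, Q.mulVec (bk k) = μ k • (bk k) := by
    intro k
    have h := hQsym.mulVec_eigenvectorBasis k
    funext i
    have := congrFun h i
    simpa [WithLp.equiv, bk] using this
  let w' : EuclideanSpace ℝ (Fin N) := WithLp.toLp 2 w
  let Qw : EuclideanSpace ℝ (Fin N) := WithLp.toLp 2 (Q.mulVec w)
  have hinner : ∀ (x y : EuclideanSpace ℝ (Fin N)), ⟪x, y⟫_ℝ = ∑ i, x i * y i := by
    intro x y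
    simp [PiLp.inner_apply, mul_comm]
  have key1 : ∑ i, w i * w i = ∑ k, ⟪w', B k⟫_ℝ * ⟪B k, w'⟫_ℝ := by
    rw [B.sum_inner_mul_inner w' w', hinner]
  have key2 : ∑ i, w i * Q.mulVec w i = ∑ k, ⟪w', B k⟫_ℝ * ⟪B k, Qw⟫_ℝ := by
    rw [B.sum_inner_mul_inner w' Qw, hinner]
  have keyk : ∀ k, ⟪B k, Qw⟫_ℝ = μ k * ⟪B k, w'⟫_ℝ := by
    intro k
    rw [hinner, hinner]
    calc ∑ i, (B k) i * Qw i = ∑ i, Q.mulVec (bk k) i * w i :=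
          quad_sym Q hQT (bk k) w
      _ = ∑ i, μ k * ((B k) i * w i) := by
          refine Finset.sum_congr rfl fun i _ => ?_
          rw [hbk k]
          simp [bk, mul_assoc]
      _ = μ k * ∑ i, (B k) i * w i := by rw [Finset.mul_sum]
  have hterm : ∀ k, lam2 * (⟪B k, w'⟫_ℝ * ⟪B k, w'⟫_ℝ) ≤ μ k * (⟪B k, w'⟫_ℝ * ⟪B k, w'⟫_ℝ) := by
    intro k
    rcases eq_or_ne (⟪B k, w'⟫_ℝ) 0 with hc | hc
    · simp [hc]
    · have hμk : μ k ≠ 0 := by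
        intro h0
        have hbk0 : Q.mulVec (bk k) = 0 := by
          rw [hbk k, h0, zero_smul]
        have hconst := hker _ hbk0
        have : ⟪B k, w'⟫_ℝ = 0 := by
          rw [hinner]
          calc ∑ i, (B k) i * w i = ∑ i, (B k) k * w i :=
                Finset.sum_congr rfl fun i _ => by
                  have := hconst i k
                  simp only [bk] at this
                  rw [this]
            _ = (B k) k * ∑ i, w i := by rw [Finset.mul_sum]
            _ = 0 := by rw [hw, mul_zero]
        exact hc this
      have hne : bk k ≠ 0 := by
        have h0 := B.orthonormal.ne_zero k
        intro h
        apply h0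
        ext i
        exact congrFun h i
      have := h_min (μ k) (bk k) hne (hbk k) hμk
      exact mul_le_mul_of_nonneg_right this (mul_self_nonneg _)
  calc lam2 * ∑ i, w i ^ 2 = ∑ k, lam2 * (⟪B k, w'⟫_ℝ * ⟪B k, w'⟫_ℝ) := by
        simp_rw [pow_two]
        rw [key1, Finset.mul_sum]
        refine Finset.sum_congr rfl fun k _ => ?_
        rw [real_inner_comm w' (B k)]
    _ ≤ ∑ k, μ k * (⟪B k, w'⟫_ℝ * ⟪B k, w'⟫_ℝ) := Finset.sum_le_sum fun k _ => hterm k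
    _ = ∑ i, w i * Q.mulVec w i := by
        rw [key2]
        refine Finset.sum_congr rfl fun k _ => ?_
        rw [keyk k, real_inner_comm w' (B k)]
        ring

section
variable {N : ℕ} (A : Matrix (Fin N) (Fin N) ℝ)
  (L : Matrix (Fin N) (Fin N) ℝ)
  (v : Fin N → ℝ)
  (Q : Matrix (Fin N) (Fin N) ℝ)


lemma quad_eq_L (hQ : Q = Lᵀ * Matrix.diagonal v + Matrix.diagonal v * L) (x : Fin N → ℝ) :
    ∑ i, x i * Q.mulVec x i = 2 * ∑ i, v i * x i * L.mulVec x i := by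
  have hQij : ∀ i j, Q i j = L j i * v j + v i * L i j := by
    intro i j
    rw [hQ]
    simp [Matrix.add_apply, Matrix.mul_diagonal, Matrix.diagonal_mul, Matrix.transpose_apply]
  have lhs1 : ∑ i, x i * Q.mulVec x i
      = (∑ i, ∑ j, v j * L j i * (x i * x j)) + ∑ i, ∑ j, v i * L i j * (x i * x j) := by
    rw [← Finset.sum_add_distrib]
    refine Finset.sum_congr rfl fun i _ => ?_
    simp only [Matrix.mulVec, dotProduct]
    rw [Finset.mul_sum, ← Finset.sum_add_distrib]
    refine Finset.sum_congr rfl fun j _ => ?_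
    rw [hQij i j]; ring
  have swap : ∑ i, ∑ j, v j * L j i * (x i * x j) = ∑ i, ∑ j, v i * L i j * (x i * x j) := by
    rw [Finset.sum_comm]
    exact Finset.sum_congr rfl fun i _ => Finset.sum_congr rfl fun j _ => by ring
  have rhs1 : ∑ i, v i * x i * L.mulVec x i = ∑ i, ∑ j, v i * L i j * (x i * x j) := by
    refine Finset.sum_congr rfl fun i _ => ?_
    simp only [Matrix.mulVec, dotProduct]
    rw [Finset.mul_sum]
    exact Finset.sum_congr rfl fun j _ => by ring
  rw [lhs1, swap, rhs1]
  ring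

lemma quad_form_eq (hL : L = Matrix.diagonal (fun i => ∑ j, A i j) - A)
    (hv_left : Matrix.vecMul v L = 0)
    (hQ : Q = Lᵀ * Matrix.diagonal v + Matrix.diagonal v * L) (x : Fin N → ℝ) :
    ∑ i, x i * Q.mulVec x i = ∑ i, ∑ j, v i * A i j * (x i - x j) ^ 2 := by
  have hcol : ∀ j, ∑ i, v i * A i j = v j * ∑ k, A j k := by
    intro j
    have h0 := congrFun hv_left j
    rw [hL] at h0
    simp only [Matrix.vecMul, dotProduct, Matrix.sub_apply, Matrix.diagonal_apply,
      Pi.zero_apply, mul_sub, Finset.sum_sub_distrib] at h0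
    have h1 : ∑ i, v i * (if i = j then ∑ k, A i k else 0) = v j * ∑ k, A j k := by
      rw [Finset.sum_eq_single j]
      · simp
      · intro b _ hb; simp [hb]
      · intro hj; exact absurd (Finset.mem_univ j) hj
    rw [h1] at h0
    linarith
  have hLx : ∀ i, L.mulVec x i = (∑ k, A i k) * x i - ∑ j, A i j * x j := by
    intro i
    rw [hL, Matrix.sub_mulVec, Pi.sub_apply, Matrix.mulVec_diagonal]
    simp [Matrix.mulVec, dotProduct]
  set D1 : ℝ := ∑ i, (∑ k, A i k) * (v i * x i ^ 2) with hD1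
  set S2 : ℝ := ∑ i, ∑ j, v i * A i j * (x i * x j) with hS2
  have c1 : ∑ i, v i * x i * L.mulVec x i = D1 - S2 := by
    rw [hD1, hS2, ← Finset.sum_sub_distrib]
    refine Finset.sum_congr rfl fun i _ => ?_
    rw [hLx i, mul_sub]
    congr 1
    · ring
    · rw [Finset.mul_sum]
      exact Finset.sum_congr rfl fun j _ => by ring
  have c2 : ∑ i, ∑ j, v i * A i j * x j ^ 2 = D1 := by
    rw [Finset.sum_comm, hD1]
    refine Finset.sum_congr rfl fun j _ => ?_
    have : ∑ i, v i * A i j * x j ^ 2 = (∑ i, v i * A i j) * x j ^ 2 :=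
      (Finset.sum_mul _ _ _).symm
    rw [this, hcol j]
    ring
  have c3 : ∑ i, ∑ j, v i * A i j * x i ^ 2 = D1 := by
    rw [hD1]
    refine Finset.sum_congr rfl fun i _ => ?_
    have : ∑ j, v i * A i j * x i ^ 2 = ∑ j, A i j * (v i * x i ^ 2) :=
      Finset.sum_congr rfl fun j _ => by ring
    rw [this, ← Finset.sum_mul]
  have c4 : ∑ i, ∑ j, v i * A i j * (x i - x j) ^ 2
      = (∑ i, ∑ j, v i * A i j * x i ^ 2) + (∑ i, ∑ j, v i * A i j * x j ^ 2)
        - 2 * S2 := by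
    rw [hS2]
    have expand : ∀ i j : Fin N, v i * A i j * (x i - x j) ^ 2
        = v i * A i j * x i ^ 2 + v i * A i j * x j ^ 2 - 2 * (v i * A i j * (x i * x j)) := by
      intro i j; ring
    simp_rw [expand]
    rw [Finset.mul_sum]
    simp_rw [Finset.mul_sum, Finset.sum_sub_distrib, Finset.sum_add_distrib]
  rw [quad_eq_L L v Q hQ x, c1, c4, c2, c3]
  ring

lemma ker_const (hA_nonneg : ∀ i j, 0 ≤ A i j)
    (hconn : ∀ i j : Fin N, i ≠ j →
      Relation.TransGen (fun p q : Fin N => 0 < A q p) i j)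
    (hL : L = Matrix.diagonal (fun i => ∑ j, A i j) - A)
    (hv_pos : ∀ i, 0 < v i)
    (hv_left : Matrix.vecMul v L = 0)
    (hQ : Q = Lᵀ * Matrix.diagonal v + Matrix.diagonal v * L)
    (x : Fin N → ℝ) (hx : Q.mulVec x = 0) : ∀ i j, x i = x j := by
  have hq0 : ∑ i, ∑ j, v i * A i j * (x i - x j) ^ 2 = 0 := by
    rw [← quad_form_eq A L v Q hL hv_left hQ x]
    simp [hx]
  have hterm : ∀ i j, v i * A i j * (x i - x j) ^ 2 = 0 := by
    have h1 := (Finset.sum_eq_zero_iff_of_nonneg (fun i _ =>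
      Finset.sum_nonneg fun j _ => mul_nonneg (mul_nonneg (hv_pos i).le (hA_nonneg i j))
        (sq_nonneg _))).mp hq0
    intro i j
    have h2 := (Finset.sum_eq_zero_iff_of_nonneg (fun j _ =>
      mul_nonneg (mul_nonneg (hv_pos i).le (hA_nonneg i j)) (sq_nonneg _))).mp
      (h1 i (Finset.mem_univ i))
    exact h2 j (Finset.mem_univ j)
  have hstep : ∀ p q : Fin N, 0 < A q p → x p = x q := by
    intro p q hpq
    have h := hterm q p
    have : (x q - x p) ^ 2 = 0 := by
      by_contra hne
      exact mul_ne_zero (mul_ne_zero (hv_pos q).ne' hpq.ne') hne h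
    have h2 := pow_eq_zero_iff (n := 2) (by norm_num) |>.mp this
    have := sub_eq_zero.mp h2
    linarith
  have htg : ∀ {a b : Fin N}, Relation.TransGen (fun p q : Fin N => 0 < A q p) a b →
      x a = x b := by
    intro a b h
    induction h with
    | single h => exact hstep _ _ h
    | tail _ h ih => exact ih.trans (hstep _ _ h)
  intro i j
  rcases eq_or_ne i j with rfl | hij
  · rfl
  · exact htg (hconn i j hij)
end
lemma young_aux (ε r : ℝ) (hε : 0 < ε) (hr : 0 ≤ r) : 2 * r ≤ ε * r ^ 2 + 1 / ε := by
  have h1 : ε * (1 / ε) = 1 := mul_one_div_cancel hε.ne'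
  nlinarith [sq_nonneg (ε * r - 1), hε, sq_nonneg r]

set_option maxHeartbeats 1000000 in
/-- Lyapunov derivative bound for the adaptive-gain consensus dynamics
`γ̇ = -k_γ L γ + g(t)` with `|g_i| ≤ 1`: along solutions,
`Ẇ ≤ -(k_γ λ₂(Q) / (2 max_i v_i)) W + 2 / (k_γ λ₂(Q))`, where
`W(γ) = (γ - 1 γ_s)ᵀ V (γ - 1 γ_s)`, `γ_s = vᵀγ`, `Q = LᵀV + VL`. -/
theorem adaptive_gain_lyapunov_bound {N : ℕ} (hN : 0 < N)
    (A : Matrix (Fin N) (Fin N) ℝ)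
    (hA_nonneg : ∀ i j, 0 ≤ A i j) (hA_diag : ∀ i, A i i = 0)
    (hconn : ∀ i j : Fin N, i ≠ j →
      Relation.TransGen (fun p q : Fin N => 0 < A q p) i j)
    (L : Matrix (Fin N) (Fin N) ℝ)
    (hL : L = Matrix.diagonal (fun i => ∑ j, A i j) - A)
    (v : Fin N → ℝ) (hv_pos : ∀ i, 0 < v i)
    (hv_left : Matrix.vecMul v L = 0) (hv_sum : ∑ i, v i = 1)
    (vmax : ℝ) (hvmax : IsGreatest (Set.range v) vmax)
    (Q : Matrix (Fin N) (Fin N) ℝ)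
    (hQ : Q = Lᵀ * Matrix.diagonal v + Matrix.diagonal v * L)
    (lam2 : ℝ)
    (h_eig : ∃ x : Fin N → ℝ, x ≠ 0 ∧ Q.mulVec x = lam2 • x)
    (h_pos : 0 < lam2)
    (h_min : ∀ (μ : ℝ) (x : Fin N → ℝ), x ≠ 0 → Q.mulVec x = μ • x → μ ≠ 0 → lam2 ≤ μ)
    (kγ : ℝ) (hkγ : 0 < kγ)
    (g : ℝ → Fin N → ℝ) (hg : ∀ t i, 0 ≤ t → |g t i| ≤ 1)
    (γ : ℝ → Fin N → ℝ)
    (hODE : ∀ t, 0 ≤ t →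
      HasDerivAt γ ((fun i => -kγ * (L.mulVec (γ t)) i + g t i) : Fin N → ℝ) t)
    (Wf : (Fin N → ℝ) → ℝ)
    (hWf : ∀ x : Fin N → ℝ,
      Wf x = ∑ i, v i * (x i - ∑ j, v j * x j) ^ 2) :
    ∀ t, 0 ≤ t →
      deriv (fun s => Wf (γ s)) t ≤
        -(kγ * lam2 / (2 * vmax)) * Wf (γ t) + 2 / (kγ * lam2) := by
  intro t ht
  -- basic facts about v and vmax
  have hv_le : ∀ i, v i ≤ vmax := fun i => hvmax.2 (Set.mem_range_self i)
  obtain ⟨i0, hi0⟩ := hvmax.1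
  have hvmax_pos : 0 < vmax := hi0 ▸ hv_pos i0
  have hvmax_le1 : vmax ≤ 1 := by
    rw [← hi0, ← hv_sum]
    exact Finset.single_le_sum (fun i _ => (hv_pos i).le) (Finset.mem_univ i0)
  have hQT : Qᵀ = Q := by
    rw [hQ]
    simp [Matrix.transpose_add, Matrix.transpose_mul, Matrix.diagonal_transpose, add_comm]
  have hrow : ∀ i, ∑ j, L i j = 0 := by
    intro i
    rw [hL]
    simp [Matrix.sub_apply, Matrix.diagonal_apply, Finset.sum_sub_distrib]
  -- notation
  set y : Fin N → ℝ := γ t with hy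
  set yd : Fin N → ℝ := fun i => -kγ * (L.mulVec (γ t)) i + g t i with hyd
  set s : ℝ := ∑ j, v j * y j with hs
  set sd : ℝ := ∑ j, v j * yd j with hsd
  set e : Fin N → ℝ := fun i => y i - s with he
  -- derivative computation
  have hcoord : ∀ i, HasDerivAt (fun u => γ u i) (yd i) t :=
    hasDerivAt_pi.mp (hODE t ht)
  have hS : HasDerivAt (fun u => ∑ j, v j * γ u j) sd t := by
    apply HasDerivAt.fun_sum
    intro j _
    exact (hcoord j).const_mul (v j)
  have hterm : ∀ i, HasDerivAt (fun u => v i * (γ u i - ∑ j, v j * γ u j) ^ 2)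
      (v i * ((2 : ℕ) * (y i - s) ^ 1 * (yd i - sd))) t := by
    intro i
    exact (((hcoord i).sub hS).pow 2).const_mul (v i)
  have hWd : HasDerivAt (fun u => Wf (γ u))
      (∑ i, v i * ((2 : ℕ) * (y i - s) ^ 1 * (yd i - sd))) t := by
    have hfun : (fun u => Wf (γ u)) = fun u => ∑ i, v i * (γ u i - ∑ j, v j * γ u j) ^ 2 :=
      funext fun u => hWf (γ u)
    rw [hfun]
    exact HasDerivAt.fun_sum fun i _ => hterm i
  have hderiv : deriv (fun u => Wf (γ u)) t = ∑ i, v i * (2 * e i * (yd i - sd)) := by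
    rw [hWd.deriv]
    refine Finset.sum_congr rfl fun i _ => ?_
    simp [he]
  rw [hderiv]
  -- algebraic identities
  have hsum0 : ∑ i, v i * e i = 0 := by
    simp only [he, mul_sub]
    rw [Finset.sum_sub_distrib, ← Finset.sum_mul, hv_sum, ← hs]
    ring
  have hLe : ∀ i, L.mulVec e i = L.mulVec y i := by
    intro i
    simp only [Matrix.mulVec, dotProduct, he, mul_sub]
    rw [Finset.sum_sub_distrib, ← Finset.sum_mul, hrow i]
    ring
  set QQ : ℝ := ∑ i, e i * Q.mulVec e i with hQQ
  set G : ℝ := ∑ i, v i * e i * g t i with hG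
  have hD : ∑ i, v i * (2 * e i * (yd i - sd)) = -kγ * QQ + 2 * G := by
    have step1 : ∑ i, v i * (2 * e i * (yd i - sd))
        = 2 * (∑ i, v i * e i * yd i) - (2 * sd) * ∑ i, v i * e i := by
      rw [Finset.mul_sum, Finset.mul_sum, ← Finset.sum_sub_distrib]
      refine Finset.sum_congr rfl fun i _ => by ring
    rw [step1, hsum0, mul_zero, sub_zero]
    have step2 : ∑ i, v i * e i * yd i
        = -kγ * (∑ i, v i * e i * L.mulVec e i) + G := by
      rw [hG, Finset.mul_sum, ← Finset.sum_add_distrib]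
      refine Finset.sum_congr rfl fun i _ => ?_
      rw [hLe i]
      simp only [hyd, ← hy]
      ring
    rw [step2, hQQ, quad_eq_L L v Q hQ e]
    ring
  rw [hD]
  -- spectral lower bound on QQ
  set c : ℝ := (∑ i, e i) / N with hc
  set w : Fin N → ℝ := fun i => e i - c with hw
  have hwsum : ∑ i, w i = 0 := by
    simp only [hw]
    rw [Finset.sum_sub_distrib, Finset.sum_const, Finset.card_univ, Fintype.card_fin, hc]
    have hN' : (N : ℝ) ≠ 0 := by exact_mod_cast hN.ne'
    rw [nsmul_eq_mul, mul_div_cancel₀ _ hN', sub_self]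
  have hQ1 : Q.mulVec (fun _ => (1 : ℝ)) = 0 := by
    rw [hQ, Matrix.add_mulVec, ← Matrix.mulVec_mulVec, ← Matrix.mulVec_mulVec]
    have h1 : Matrix.diagonal v *ᵥ (fun _ => (1 : ℝ)) = v := by
      funext i; simp [Matrix.mulVec_diagonal]
    have h2 : L *ᵥ (fun _ => (1 : ℝ)) = 0 := by
      funext i
      simp only [Matrix.mulVec, dotProduct, mul_one, Pi.zero_apply]
      exact hrow i
    rw [h1, h2, Matrix.mulVec_zero, Matrix.mulVec_transpose]
    rw [hv_left]
    simp
  have hQe_w : Q.mulVec e = Q.mulVec w := by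
    have : e = fun i => w i + c * (fun _ => (1:ℝ)) i := by
      funext i; simp [hw]
    rw [this]
    have : (fun i => w i + c * (fun _ => (1:ℝ)) i) = w + c • (fun _ => (1:ℝ)) := by
      funext i; simp
    rw [this, Matrix.mulVec_add, Matrix.mulVec_smul, hQ1, smul_zero, add_zero]
  have hQQw : QQ = ∑ i, w i * Q.mulVec w i := by
    rw [hQQ]
    have h1 : ∑ i, e i * Q.mulVec e i = ∑ i, e i * Q.mulVec w i := by
      refine Finset.sum_congr rfl fun i _ => by rw [hQe_w]
    have h2 : ∑ i, e i * Q.mulVec w i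
        = ∑ i, w i * Q.mulVec w i + c * ∑ i, Q.mulVec w i := by
      rw [Finset.mul_sum, ← Finset.sum_add_distrib]
      refine Finset.sum_congr rfl fun i _ => ?_
      simp only [hw]
      ring
    have h3 : ∑ i, Q.mulVec w i = 0 := by
      have := quad_sym Q hQT (fun _ => 1) w
      simp only [one_mul] at this
      rw [this, hQ1]
      simp
    rw [h1, h2, h3, mul_zero, add_zero]
  have hWval : Wf (γ t) = ∑ i, v i * e i ^ 2 := by
    rw [hWf]
  set W : ℝ := ∑ i, v i * e i ^ 2 with hWdef
  have hW_nonneg : 0 ≤ W :=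
    Finset.sum_nonneg fun i _ => mul_nonneg (hv_pos i).le (sq_nonneg _)
  have hvw : ∑ i, v i * w i = -c := by
    have : ∑ i, v i * w i = ∑ i, v i * e i - c * ∑ i, v i := by
      rw [Finset.mul_sum, ← Finset.sum_sub_distrib]
      refine Finset.sum_congr rfl fun i _ => by simp only [hw]; ring
    rw [this, hsum0, hv_sum]
    ring
  have hWw : W = ∑ i, v i * w i ^ 2 - c ^ 2 := by
    have : ∑ i, v i * e i ^ 2
        = ∑ i, (v i * w i ^ 2 + 2 * c * (v i * w i) + c ^ 2 * v i) := by
      refine Finset.sum_congr rfl fun i _ => ?_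
      have : e i = w i + c := by simp [hw]
      rw [this]
      ring
    rw [hWdef, this, Finset.sum_add_distrib, Finset.sum_add_distrib,
      ← Finset.mul_sum, ← Finset.mul_sum, hvw, hv_sum]
    ring
  have hWle : W ≤ vmax * ∑ i, w i ^ 2 := by
    rw [hWw, Finset.mul_sum]
    have : ∑ i, v i * w i ^ 2 ≤ ∑ i, vmax * w i ^ 2 :=
      Finset.sum_le_sum fun i _ => mul_le_mul_of_nonneg_right (hv_le i) (sq_nonneg _)
    nlinarith [sq_nonneg c]
  have hspec : lam2 * ∑ i, w i ^ 2 ≤ ∑ i, w i * Q.mulVec w i :=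
    quad_lower Q hQT lam2 h_min
      (ker_const A L v Q hA_nonneg hconn hL hv_pos hv_left hQ) w hwsum
  have hQQ_lb : lam2 * W ≤ vmax * QQ := by
    rw [hQQw]
    calc lam2 * W ≤ lam2 * (vmax * ∑ i, w i ^ 2) :=
          mul_le_mul_of_nonneg_left hWle h_pos.le
      _ = vmax * (lam2 * ∑ i, w i ^ 2) := by ring
      _ ≤ vmax * ∑ i, w i * Q.mulVec w i :=
          mul_le_mul_of_nonneg_left hspec hvmax_pos.le
  -- cross term bound
  have hG_le : G ≤ Real.sqrt W := by
    have h1 : G ≤ ∑ i, v i * |e i| := by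
      rw [hG]
      refine Finset.sum_le_sum fun i _ => ?_
      have : e i * g t i ≤ |e i| := by
        calc e i * g t i ≤ |e i * g t i| := le_abs_self _
          _ = |e i| * |g t i| := abs_mul _ _
          _ ≤ |e i| * 1 := mul_le_mul_of_nonneg_left (hg t i ht) (abs_nonneg _)
          _ = |e i| := mul_one _
      calc v i * e i * g t i = v i * (e i * g t i) := by ring
        _ ≤ v i * |e i| := mul_le_mul_of_nonneg_left this (hv_pos i).le
    have h2 : (∑ i, v i * |e i|) ^ 2 ≤ W := by
      have := Finset.sum_sq_le_sum_mul_sum_of_sq_eq_mul Finset.univ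
        (r := fun i => v i * |e i|) (f := fun i => v i) (g := fun i => v i * e i ^ 2)
        (fun i _ => (hv_pos i).le)
        (fun i _ => mul_nonneg (hv_pos i).le (sq_nonneg _))
        (fun i _ => by rw [mul_pow, sq_abs]; ring)
      rw [hv_sum, one_mul] at this
      exact this
    have h3 : 0 ≤ ∑ i, v i * |e i| :=
      Finset.sum_nonneg fun i _ => mul_nonneg (hv_pos i).le (abs_nonneg _)
    calc G ≤ ∑ i, v i * |e i| := h1
      _ ≤ Real.sqrt W := Real.le_sqrt_of_sq_le h2
  -- final combination
  rw [hWval]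
  set K : ℝ := kγ * lam2 with hKdef
  have hK : 0 < K := mul_pos hkγ h_pos
  have hε : 0 < K / (2 * vmax) := div_pos hK (by linarith)
  have hr2 : Real.sqrt W ^ 2 = W := Real.sq_sqrt hW_nonneg
  have hy := young_aux (K / (2 * vmax)) (Real.sqrt W) hε (Real.sqrt_nonneg W)
  rw [hr2] at hy
  have hinv : 1 / (K / (2 * vmax)) = 2 * vmax / K := one_div_div _ _
  rw [hinv] at hy
  have hQQle : -kγ * QQ ≤ -(K / vmax) * W := by
    have h1 : kγ * (lam2 * W) ≤ kγ * (vmax * QQ) :=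
      mul_le_mul_of_nonneg_left hQQ_lb hkγ.le
    rw [neg_mul, neg_mul, neg_le_neg_iff, div_mul_eq_mul_div, div_le_iff₀ hvmax_pos]
    nlinarith
  have hconst : 2 * vmax / K ≤ 2 / K :=
    (div_le_div_iff_of_pos_right hK).mpr (by linarith)
  have hhalf : -(K / vmax) * W + (K / (2 * vmax)) * W = -(K / (2 * vmax)) * W := by
    field_simp
    ring
  have h2G : 2 * G ≤ (K / (2 * vmax)) * W + 2 / K := by
    calc 2 * G ≤ 2 * Real.sqrt W := by linarith [hG_le]
      _ ≤ (K / (2 * vmax)) * W + 2 * vmax / K := hy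
      _ ≤ (K / (2 * vmax)) * W + 2 / K := by linarith
  linarith
end
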